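/- Let G be a finite simple connected graph with a universal vertex v̂ (adjacent to all other vertices), and suppose G has at least 2 vertices. Then D^c_G(-1) = D^c_{G - v̂}(-1) if G - v̂ is connected; more precisely, the signed count over connected dominating sets of G containing v̂ is Σ_{S ⊆ V(G)\{v̂}} (-1)^{|S|+1} = 0, so D^c_G(-1) equals the signed count over connected dominating sets of G avoiding v̂, which are exactly the connected dominating sets of G − v̂ that also dominate v̂ — and since v̂ is adjacent to everything, these are exactly the connected dominating sets of G − v̂. -/

import Mathlib

open Finset

attribute [local instance] Classical.propDecidable

/-- `D` is a connected dominating set of `G`. -/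
def ConnDomSet {V : Type*} (G : SimpleGraph V) (D : Finset V) : Prop :=
  D.Nonempty ∧ (G.induce (D : Set V)).Connected ∧
    ∀ v : V, v ∈ D ∨ ∃ u ∈ D, G.Adj u v

/-- A graph with a universal vertex is connected. -/
lemma connected_of_universal {W : Type*} (H : SimpleGraph W) (c : W)
    (h : ∀ x, x ≠ c → H.Adj c x) : H.Connected := by
  rw [SimpleGraph.connected_iff]
  refine ⟨fun x y => ?_, ⟨c⟩⟩
  have hx : H.Reachable c x := by
    rcases eq_or_ne x c with rfl | h'
    · exact SimpleGraph.Reachable.refl _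
    · exact (h x h').reachable
  have hy : H.Reachable c y := by
    rcases eq_or_ne y c with rfl | h'
    · exact SimpleGraph.Reachable.refl _
    · exact (h y h').reachable
  exact hx.symm.trans hy

/-- Let `v̂` be a universal vertex of the connected graph `G` (at least two
vertices) and suppose `G − v̂` is connected.  The signed count over connected
dominating sets containing `v̂` vanishes; a subset avoiding `v̂` is a connected
dominating set of `G` iff it is one of `G − v̂`; hence
`D^c_G(-1) = D^c_{G − v̂}(-1)`. -/
theorem universal_vertex_deletion
    {V : Type*} [Fintype V] [DecidableEq V] (G : SimpleGraph V)
    (hconn : G.Connected) (hcard : 2 ≤ Fintype.card V)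
    (vhat : V) (huniv : ∀ u : V, u ≠ vhat → G.Adj vhat u)
    (hdel : (G.induce {v : V | v ≠ vhat}).Connected) :
    (∑ D : Finset V,
        if ConnDomSet G D ∧ vhat ∈ D then (-1 : ℤ) ^ D.card else 0) = 0 ∧
    (∀ D : Finset {v : V | v ≠ vhat},
      ConnDomSet (G.induce {v : V | v ≠ vhat}) D ↔
        ConnDomSet G (D.map (Function.Embedding.subtype _))) ∧
    (∑ D : Finset V, if ConnDomSet G D then (-1 : ℤ) ^ D.card else 0) =
      ∑ D : Finset {v : V | v ≠ vhat},
        if ConnDomSet (G.induce {v : V | v ≠ vhat}) D then (-1 : ℤ) ^ D.card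
        else 0 := by
  classical
  -- Any set containing `vhat` is a connected dominating set.
  have hmem : ∀ D : Finset V, vhat ∈ D → ConnDomSet G D := by
    intro D hD
    refine ⟨⟨vhat, hD⟩, ?_, ?_⟩
    · apply connected_of_universal _ (⟨vhat, by simpa using hD⟩ : (D : Set V))
      rintro ⟨x, hx⟩ hne
      have hxne : x ≠ vhat := fun h => hne (by simp [Subtype.ext_iff, h])
      simpa using huniv x hxne
    · intro v
      by_cases hv : v ∈ D
      · exact Or.inl hv
      · refine Or.inr ⟨vhat, hD, huniv v ?_⟩
        rintro rfl; exact hv hD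
  -- Part 1 : the signed sum over sets containing `vhat` vanishes.
  have part1 : (∑ D : Finset V,
      if ConnDomSet G D ∧ vhat ∈ D then (-1 : ℤ) ^ D.card else 0) = 0 := by
    have hcond : ∀ D : Finset V, (ConnDomSet G D ∧ vhat ∈ D) ↔ vhat ∈ D :=
      fun D => ⟨fun h => h.2, fun h => ⟨hmem D h, h⟩⟩
    calc (∑ D : Finset V, if ConnDomSet G D ∧ vhat ∈ D then (-1 : ℤ) ^ D.card else 0)
        = ∑ D : Finset V, if vhat ∈ D then (-1 : ℤ) ^ D.card else 0 := by
          refine Finset.sum_congr rfl fun D _ => ?_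
          simp [hcond D]
      _ = ∑ D ∈ (Finset.univ : Finset V).powerset,
            if vhat ∈ D then (-1 : ℤ) ^ D.card else 0 := by
          rw [Finset.powerset_univ]
      _ = 0 := by
          have hv : vhat ∉ (Finset.univ : Finset V).erase vhat := Finset.notMem_erase _ _
          rw [show (Finset.univ : Finset V) = insert vhat (Finset.univ.erase vhat) by
                rw [Finset.insert_erase (Finset.mem_univ vhat)],
              Finset.sum_powerset_insert hv]
          have h1 : ∀ t ∈ ((Finset.univ : Finset V).erase vhat).powerset,
              (if vhat ∈ t then (-1 : ℤ) ^ t.card else 0) = 0 := by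
            intro t ht
            rw [Finset.mem_powerset] at ht
            have : vhat ∉ t := fun h => hv (ht h)
            simp [this]
          rw [Finset.sum_congr rfl h1, Finset.sum_const_zero, zero_add]
          have h2 : ∀ t ∈ ((Finset.univ : Finset V).erase vhat).powerset,
              (if vhat ∈ insert vhat t then (-1 : ℤ) ^ (insert vhat t).card else 0)
                = -(-1 : ℤ) ^ t.card := by
            intro t ht
            rw [Finset.mem_powerset] at ht
            have : vhat ∉ t := fun h => hv (ht h)
            rw [if_pos (Finset.mem_insert_self _ _), Finset.card_insert_of_notMem this,
              pow_succ]
            ring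
          rw [Finset.sum_congr rfl h2, Finset.sum_neg_distrib]
          obtain ⟨b, hb⟩ := Fintype.exists_ne_of_one_lt_card (by omega) vhat
          have hne : ((Finset.univ : Finset V).erase vhat).Nonempty :=
            ⟨b, Finset.mem_erase.mpr ⟨hb, Finset.mem_univ b⟩⟩
          rw [Finset.sum_powerset_neg_one_pow_card_of_nonempty hne, neg_zero]
  -- Part 2 : the iff.
  have part2 : ∀ D : Finset {v : V | v ≠ vhat},
      ConnDomSet (G.induce {v : V | v ≠ vhat}) D ↔
        ConnDomSet G (D.map (Function.Embedding.subtype _)) := by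
    intro D
    set D' : Finset V := D.map (Function.Embedding.subtype _) with hD'
    have hmemD' : ∀ x : V, x ∈ D' ↔ ∃ h : x ≠ vhat, (⟨x, h⟩ : {v : V | v ≠ vhat}) ∈ D := by
      intro x
      simp only [hD', Finset.mem_map, Function.Embedding.coe_subtype]
      constructor
      · rintro ⟨⟨a, ha⟩, haD, rfl⟩
        exact ⟨ha, haD⟩
      · rintro ⟨h, hD⟩
        exact ⟨⟨x, h⟩, hD, rfl⟩
    -- graph isomorphism between the two induced graphs
    have hiso : ((G.induce {v : V | v ≠ vhat}).induce (D : Set {v : V | v ≠ vhat})) ≃g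
        (G.induce (D' : Set V)) := by
      refine ⟨Equiv.ofBijective (fun x => ⟨x.1.1, by
        rw [Finset.mem_coe, hmemD']
        exact ⟨x.1.2, by simpa using x.2⟩⟩) ⟨?_, ?_⟩, ?_⟩
      · rintro ⟨⟨a, ha⟩, ha'⟩ ⟨⟨b, hb⟩, hb'⟩ h
        simp only [Subtype.mk.injEq] at h
        simp [Subtype.ext_iff, h]
      · rintro ⟨y, hy⟩
        rw [Finset.mem_coe, hmemD'] at hy
        obtain ⟨hne, hD⟩ := hy
        exact ⟨⟨⟨y, hne⟩, by simpa using hD⟩, rfl⟩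
      · rintro ⟨⟨a, ha⟩, ha'⟩ ⟨⟨b, hb⟩, hb'⟩
        exact Iff.rfl
    constructor
    · rintro ⟨hne, hc, hdom⟩
      refine ⟨?_, ?_, ?_⟩
      · obtain ⟨a, ha⟩ := hne
        exact ⟨a.1, (hmemD' a.1).mpr ⟨a.2, by simpa using ha⟩⟩
      · exact hiso.connected_iff.mp hc
      · intro v
        rcases eq_or_ne v vhat with rfl | hv
        · obtain ⟨a, ha⟩ := hne
          refine Or.inr ⟨a.1, (hmemD' a.1).mpr ⟨a.2, ha⟩, (huniv a.1 a.2).symm⟩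
        · rcases hdom ⟨v, hv⟩ with h | ⟨u, hu, hadj⟩
          · exact Or.inl ((hmemD' v).mpr ⟨hv, h⟩)
          · refine Or.inr ⟨u.1, (hmemD' u.1).mpr ⟨u.2, hu⟩, ?_⟩
            simpa using hadj
    · rintro ⟨hne, hc, hdom⟩
      refine ⟨?_, ?_, ?_⟩
      · obtain ⟨a, ha⟩ := hne
        rw [hmemD'] at ha
        obtain ⟨h, hD⟩ := ha
        exact ⟨⟨a, h⟩, hD⟩
      · exact hiso.connected_iff.mpr hc
      · rintro ⟨v, hv⟩
        rcases hdom v with h | ⟨u, hu, hadj⟩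
        · rw [hmemD'] at h
          obtain ⟨h1, h2⟩ := h
          exact Or.inl h2
        · rw [hmemD'] at hu
          obtain ⟨h1, h2⟩ := hu
          exact Or.inr ⟨⟨u, h1⟩, h2, by simpa using hadj⟩
  refine ⟨part1, part2, ?_⟩
  -- Part 3
  have hsplit : (∑ D : Finset V, if ConnDomSet G D then (-1 : ℤ) ^ D.card else 0) =
      (∑ D : Finset V, if ConnDomSet G D ∧ vhat ∈ D then (-1 : ℤ) ^ D.card else 0) +
      (∑ D : Finset V, if ConnDomSet G D ∧ vhat ∉ D then (-1 : ℤ) ^ D.card else 0) := by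
    rw [← Finset.sum_add_distrib]
    refine Finset.sum_congr rfl fun D _ => ?_
    by_cases h : ConnDomSet G D <;> by_cases h2 : vhat ∈ D <;> simp [h, h2]
  rw [hsplit, part1, zero_add]
  have hfilter : (∑ D : Finset V, if ConnDomSet G D ∧ vhat ∉ D then (-1 : ℤ) ^ D.card else 0) =
      ∑ D ∈ Finset.univ.filter (fun D : Finset V => vhat ∉ D),
        if ConnDomSet G D then (-1 : ℤ) ^ D.card else 0 := by
    rw [Finset.sum_filter]
    refine Finset.sum_congr rfl fun D _ => ?_
    by_cases h : ConnDomSet G D <;> by_cases h2 : vhat ∈ D <;> simp [h, h2]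
  rw [hfilter]
  refine (Finset.sum_nbij' (fun D : Finset V => D.subtype (fun v => v ∈ {v : V | v ≠ vhat}))
    (fun E : Finset {v : V | v ≠ vhat} => E.map (Function.Embedding.subtype _))
    (fun D _ => Finset.mem_univ _) (fun E _ => ?_) (fun D hD => ?_) (fun E _ => ?_)
    (fun D hD => ?_))
  · -- map lands in the filter
    simp only [Finset.mem_filter, Finset.mem_univ, true_and]
    intro h
    rw [Finset.mem_map] at h
    obtain ⟨a, _, ha⟩ := h
    exact a.2 ha
  · -- left inverse
    simp only [Finset.mem_filter, Finset.mem_univ, true_and] at hD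
    rw [Finset.subtype_map]
    exact Finset.filter_true_of_mem fun x hx => fun (h : x = vhat) => hD (h ▸ hx)
  · -- right inverse
    ext ⟨a, ha⟩
    simp only [Finset.mem_subtype, Finset.mem_map, Function.Embedding.coe_subtype]
    exact ⟨fun ⟨b, hb, hba⟩ => by rwa [show (⟨a, ha⟩ : {v : V | v ≠ vhat}) = b from (Subtype.ext hba.symm)],
      fun h => ⟨⟨a, ha⟩, h, rfl⟩⟩
  · -- summand equality
    simp only [Finset.mem_filter, Finset.mem_univ, true_and] at hD
    have hback : (D.subtype (fun v => v ∈ {v : V | v ≠ vhat})).map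
        (Function.Embedding.subtype _) = D := by
      rw [Finset.subtype_map]
      exact Finset.filter_true_of_mem fun x hx => fun (h : x = vhat) => hD (h ▸ hx)
    have hcardeq : (D.subtype (fun v => v ∈ {v : V | v ≠ vhat})).card = D.card := by
      conv_rhs => rw [← hback]
      rw [Finset.card_map]
    rw [part2, hback, hcardeq]
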